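/- For any N×N matrix L and any subset A of {1,…,N}, Σ_{B : A ⊆ B ⊆ {1,…,N}} det(L_B) = det(I^{Ā} + L), where L_B is the principal submatrix indexed by B, det(L_∅) = 1, and I^{Ā} is the diagonal matrix with 1 on the diagonal entries indexed by the complement of A and 0 elsewhere. -/

import Mathlib

/-- The principal submatrix of `K` indexed by a finite subset `A`. -/
noncomputable def subMat {N : ℕ} (K : Matrix (Fin N) (Fin N) ℝ) (A : Finset (Fin N)) :
    Matrix A A ℝ :=
  K.submatrix (fun i : A => (i : Fin N)) (fun j : A => (j : Fin N))

lemma det_of_rows_id {N : ℕ} (L : Matrix (Fin N) (Fin N) ℝ) (B : Finset (Fin N))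
    (M : Matrix (Fin N) (Fin N) ℝ)
    (h1 : ∀ i ∈ B, ∀ j, M i j = L i j)
    (h2 : ∀ i ∉ B, ∀ j, M i j = if i = j then 1 else 0) :
    M.det = (subMat L B).det := by
  classical
  let e : ↥B ⊕ {i : Fin N // i ∉ B} ≃ Fin N := Equiv.sumCompl (· ∈ B)
  rw [← Matrix.det_submatrix_equiv_self e]
  have : M.submatrix e e =
      Matrix.fromBlocks (subMat L B)
        (L.submatrix (fun i : B => (i : Fin N)) (fun j : {i : Fin N // i ∉ B} => (j : Fin N)))
        0 1 := by
    ext i j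
    cases i with
    | inl i =>
      cases j with
      | inl j => simpa [e, subMat] using h1 i i.2 j
      | inr j => simpa [e, subMat] using h1 i i.2 j
    | inr i =>
      cases j with
      | inl j =>
        have hne : (i : Fin N) ≠ (j : Fin N) := by
          intro h; exact i.2 (h ▸ j.2)
        simpa [e, hne] using h2 i i.2 j
      | inr j =>
        have := h2 i i.2 j
        simp only [e, Matrix.submatrix_apply, Equiv.sumCompl_apply_inr,
          Matrix.fromBlocks_apply₂₂] at *
        rw [this]
        by_cases h : i = j
        · simp [h, Matrix.one_apply]
        · have : (i : Fin N) ≠ (j : Fin N) := fun hh => h (Subtype.ext hh)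
          simp [Matrix.one_apply, h, this]
  rw [this, Matrix.det_fromBlocks_zero₂₁, Matrix.det_one, mul_one]

/-- For any `N × N` matrix `L` and any `A ⊆ {1,…,N}`,
`Σ_{B : A ⊆ B ⊆ {1,…,N}} det(L_B) = det(I^{Ā} + L)`, where `I^{Ā}` is the diagonal
matrix with ones exactly on the diagonal entries indexed by the complement of `A`. -/
theorem sum_subdet_supersets {N : ℕ} (L : Matrix (Fin N) (Fin N) ℝ) (A : Finset (Fin N)) :
    ∑ B ∈ Finset.univ.filter (fun B => A ⊆ B), (subMat L B).det =
      (Matrix.diagonal (fun i => if i ∈ A then (0 : ℝ) else 1) + L).det := by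
  classical
  set d : Fin N → ℝ := fun i => if i ∈ A then (0 : ℝ) else 1 with hd
  set D : Matrix (Fin N) (Fin N) ℝ := Matrix.diagonal d with hD
  -- expand det of sum by multilinearity in rows
  have hexp : (D + L).det =
      ∑ S : Finset (Fin N), (Matrix.of (S.piecewise D L)).det := by
    have : (D + L) = Matrix.of (fun i => D i + L i) := rfl
    rw [this]
    exact (Matrix.detRowAlternating :
      (Fin N → ℝ) [⋀^Fin N]→ₗ[ℝ] ℝ).toMultilinearMap.map_add_univ D L
  rw [hexp]
  -- terms with S ⊄ Aᶜ vanish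
  rw [← Finset.sum_filter_add_sum_filter_not Finset.univ (fun S => S ⊆ Aᶜ)]
  have hzero : ∑ S ∈ Finset.univ.filter (fun S => ¬ S ⊆ Aᶜ),
      (Matrix.of (S.piecewise D L)).det = 0 := by
    apply Finset.sum_eq_zero
    intro S hS
    simp only [Finset.mem_filter, Finset.mem_univ, true_and] at hS
    obtain ⟨i, hiS, hiA⟩ : ∃ i ∈ S, i ∈ A := by
      by_contra h
      push_neg at h
      exact hS fun i hi => Finset.mem_compl.2 (h i hi)
    apply Matrix.det_eq_zero_of_row_eq_zero i
    intro j
    simp only [Matrix.of_apply, Finset.piecewise, hiS, if_true]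
    simp [Finset.piecewise_eq_of_mem _ _ _ hiS, hD, hd, Matrix.diagonal_apply, hiA]
  rw [hzero, add_zero]
  -- bijection B ↦ Bᶜ
  symm
  apply Finset.sum_bij' (fun S _ => Sᶜ) (fun B _ => Bᶜ)
  case hi =>
    intro S hS
    simp only [Finset.mem_filter, Finset.mem_univ, true_and] at hS ⊢
    intro a ha
    exact Finset.mem_compl.2 fun h => absurd (hS h) (by simp [ha])
  case hj =>
    intro B hB
    simp only [Finset.mem_filter, Finset.mem_univ, true_and] at hB ⊢
    intro a ha
    exact Finset.mem_compl.2 fun h => absurd (hB h) (Finset.mem_compl.1 ha)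
  case left_neg => intro S _; simp
  case right_neg => intro B _; simp
  case h =>
    intro S hS
    simp only [Finset.mem_filter, Finset.mem_univ, true_and] at hS
    apply det_of_rows_id
    · intro i hi j
      have : i ∉ S := by simpa using hi
      simp [Finset.piecewise, this]
    · intro i hi j
      have hiS : i ∈ S := by simpa using hi
      have hiA : i ∉ A := by
        intro h; exact absurd (hS hiS) (by simp [h])
      simp [Finset.piecewise, hiS, Finset.piecewise_eq_of_mem _ _ _ hiS, hD, hd, Matrix.diagonal_apply, hiA]
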